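/- Fix η₀ > 0, an integer r ≥ 4, a constant C > 0, and reals a_{n,m}^{ν,μ} indexed by admissible quadruples satisfying |a_{n,m}^{ν,μ}| ≤ C/(n+m+1)^r. Let b_{n,m}^{ν,μ} be defined from the a_{n,m}^{ν,μ} by the tridiagonal relations. Then there exists a constant C′ > 0, depending only on C and η₀, such that |b_{n,m}^{ν,μ}| ≤ C′/(n+m+1)^{r−1} for every admissible quadruple (n,m,ν,μ). -/

import Mathlib

open Real MeasureTheory intervalIntegral Filter Topology
open Set

/-- Associated Legendre function of the second kind of half-integer degree,
`Q_{n-1/2}^m(t)`, defined via its real integral representation (valid for `t > 1`). -/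
noncomputable def Qh (n m : ℕ) (t : ℝ) : ℝ :=
  ((-1 : ℝ) ^ m / (2 : ℝ) ^ ((n : ℝ) + 1 / 2)) *
    (Real.Gamma ((n : ℝ) + (m : ℝ) + 1 / 2) / Real.Gamma ((n : ℝ) + 1 / 2)) *
    (t ^ 2 - 1) ^ ((m : ℝ) / 2) *
    ∫ s in (-1 : ℝ)..1, (1 - s ^ 2) ^ ((n : ℝ) - 1 / 2) * (t - s) ^ (-((n : ℝ) + (m : ℝ) + 1 / 2))

/-- `q_{n,m} = Q_{n-1/2}^m(cosh η₀)`. -/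
noncomputable def qh (η₀ : ℝ) (n m : ℕ) : ℝ := Qh n m (Real.cosh η₀)

/-- `Φ_n^{+1}(θ) = cos (n θ)`, `Φ_n^{-1}(θ) = sin (n θ)`. -/
noncomputable def Phi (ν : ℤ) (n : ℤ) (θ : ℝ) : ℝ :=
  if ν = 1 then Real.cos ((n : ℝ) * θ) else Real.sin ((n : ℝ) * θ)

/-- A quadruple `(n, m, ν, μ)` is admissible. -/
def Admissible (n m : ℕ) (ν μ : ℤ) : Prop :=
  (ν = 1 ∨ ν = -1) ∧ (μ = 1 ∨ μ = -1) ∧ ¬(n = 0 ∧ ν = -1) ∧ ¬(m = 0 ∧ μ = -1)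

/-- Toroidal Neumann constant `ρ_{n,m}(η₀)` (`n ≥ 1`). -/
noncomputable def rhoT (η₀ : ℝ) (n m : ℕ) : ℝ :=
  if n = 1 then
    (1 / (2 * Real.sinh η₀)) *
      (Real.cosh η₀ + (2 * (m : ℝ) - 1) * qh η₀ 1 m / qh η₀ 0 m)
  else
    (1 / (4 * Real.sinh η₀)) *
      ((2 * (n : ℝ) - 1) * Real.cosh η₀ +
        (2 * ((m : ℝ) - (n : ℝ)) + 1) * qh η₀ n m / qh η₀ (n - 1) m)

/-- Toroidal Neumann constant `σ_{n,m}(η₀)`. -/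
noncomputable def sigmaT (η₀ : ℝ) (n m : ℕ) : ℝ :=
  (-1 / (2 * Real.sinh η₀)) *
    ((2 * (n : ℝ) * Real.cosh η₀ ^ 2 + 1) +
      (2 * ((m : ℝ) - (n : ℝ)) - 1) * Real.cosh η₀ * qh η₀ (n + 1) m / qh η₀ n m)

/-- Toroidal Neumann constant `τ_{n,m}(η₀)`. -/
noncomputable def tauT (η₀ : ℝ) (n m : ℕ) : ℝ :=
  (1 / (4 * Real.sinh η₀)) *
    ((2 * (n : ℝ) + 3) * Real.cosh η₀ +
      (2 * ((m : ℝ) - (n : ℝ)) - 3) * qh η₀ (n + 2) m / qh η₀ (n + 1) m)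

/-- The normal derivative `N_{n,m}^{ν,μ}(θ,φ)` of the interior toroidal harmonic
`I_{n,m}^{ν,μ}` on the torus `η = η₀`. -/
noncomputable def NDer (η₀ : ℝ) (n m : ℕ) (ν μ : ℤ) (θ φ : ℝ) : ℝ :=
  (Real.sqrt (Real.cosh η₀ - Real.cos θ) / (4 * Real.sinh η₀)) * Phi μ (m : ℤ) φ *
    (Phi ν ((n : ℤ) - 1) θ *
        ((1 + 2 * (n : ℝ)) * Real.cosh η₀ -
          (2 * ((n : ℝ) - (m : ℝ)) + 1) * qh η₀ (n + 1) m / qh η₀ n m) -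
      2 * Phi ν (n : ℤ) θ *
        ((2 * (n : ℝ) * Real.cosh η₀ ^ 2 + 1) -
          (2 * ((n : ℝ) - (m : ℝ)) + 1) * Real.cosh η₀ * qh η₀ (n + 1) m / qh η₀ n m) +
      Phi ν ((n : ℤ) + 1) θ *
        ((1 + 2 * (n : ℝ)) * Real.cosh η₀ -
          (2 * ((n : ℝ) - (m : ℝ)) + 1) * qh η₀ (n + 1) m / qh η₀ n m))

/-- Interior toroidal harmonic `I_{n,m}^{ν,μ}[η₀]` in toroidal coordinates. -/
noncomputable def Ih (η₀ : ℝ) (n m : ℕ) (ν μ : ℤ) (η θ φ : ℝ) : ℝ :=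
  Real.sqrt (Real.cosh η - Real.cos θ) *
    (Qh n m (Real.cosh η) / Qh n m (Real.cosh η₀)) * Phi ν (n : ℤ) θ * Phi μ (m : ℤ) φ


noncomputable def JJ (t p q : ℝ) : ℝ :=
  ∫ s in (-1:ℝ)..1, (1 - s ^ 2) ^ p * (t - s) ^ q

lemma JJ_integrable {t : ℝ} (ht : 1 < t) {p : ℝ} (hp : -1 < p) (q : ℝ) :
    IntervalIntegrable (fun s => (1 - s ^ 2) ^ p * (t - s) ^ q) volume (-1) 1 := by
  have h1 : IntervalIntegrable (fun s : ℝ => (1 + s) ^ p) volume (-1) 0 := by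
    have := (intervalIntegrable_rpow' (a := 0) (b := 1) hp).comp_add_right 1
    simpa [add_comm] using this
  have h2 : IntervalIntegrable (fun s : ℝ => (1 - s) ^ p) volume 0 1 := by
    have := (intervalIntegrable_rpow' (a := 1) (b := 0) hp).comp_sub_left 1
    simpa using this
  have hcont1 : ContinuousOn (fun s : ℝ => (1 - s) ^ p * (t - s) ^ q) (uIcc (-1) 0) := by
    rw [uIcc_of_le (by norm_num)]
    apply ContinuousOn.mul
    · exact (continuousOn_const.sub continuousOn_id).rpow_const
        (fun x hx => Or.inl (by simp only [mem_Icc] at hx; simp only [Pi.sub_apply, Pi.add_apply, id_eq]; nlinarith [hx.1, hx.2]))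
    · exact (continuousOn_const.sub continuousOn_id).rpow_const
        (fun x hx => Or.inl (by simp only [mem_Icc] at hx; simp only [Pi.sub_apply, Pi.add_apply, id_eq]; nlinarith [hx.1, hx.2]))
  have hcont2 : ContinuousOn (fun s : ℝ => (1 + s) ^ p * (t - s) ^ q) (uIcc 0 1) := by
    rw [uIcc_of_le (by norm_num)]
    apply ContinuousOn.mul
    · exact (continuousOn_const.add continuousOn_id).rpow_const
        (fun x hx => Or.inl (by simp only [mem_Icc] at hx; simp only [Pi.sub_apply, Pi.add_apply, id_eq]; nlinarith [hx.1, hx.2]))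
    · exact (continuousOn_const.sub continuousOn_id).rpow_const
        (fun x hx => Or.inl (by simp only [mem_Icc] at hx; simp only [Pi.sub_apply, Pi.add_apply, id_eq]; nlinarith [hx.1, hx.2]))
  have key : ∀ s : ℝ, -1 ≤ s → s ≤ 1 →
      (1 - s ^ 2) ^ p * (t - s) ^ q = (1 + s) ^ p * ((1 - s) ^ p * (t - s) ^ q) := by
    intro s h1s h2s
    rw [← mul_assoc, ← Real.mul_rpow (by linarith) (by linarith)]
    ring_nf
  have ha : IntervalIntegrable (fun s => (1 - s ^ 2) ^ p * (t - s) ^ q) volume (-1) 0 := by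
    rw [intervalIntegrable_iff_integrableOn_Ioc_of_le (by norm_num)]
    refine ((h1.mul_continuousOn hcont1).1).congr_fun ?_ measurableSet_Ioc
    intro s hs
    simp only [mem_Ioc] at hs
    exact (key s hs.1.le (by linarith [hs.2])).symm
  have hb : IntervalIntegrable (fun s => (1 - s ^ 2) ^ p * (t - s) ^ q) volume 0 1 := by
    rw [intervalIntegrable_iff_integrableOn_Ioc_of_le (by norm_num)]
    refine ((h2.mul_continuousOn hcont2).1).congr_fun ?_ measurableSet_Ioc
    intro s hs
    simp only [mem_Ioc] at hs
    dsimp only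
    rw [key s (by linarith [hs.1]) hs.2]
    ring
  exact ha.trans hb

lemma JJ_pos {t : ℝ} (ht : 1 < t) {p : ℝ} (hp : -1 < p) (q : ℝ) : 0 < JJ t p q := by
  refine intervalIntegral_pos_of_pos_on (JJ_integrable ht hp q) ?_ (by norm_num)
  intro x hx
  exact mul_pos (Real.rpow_pos_of_pos (by nlinarith [hx.1, hx.2] : (0:ℝ) < 1 - x ^ 2) _)
    (Real.rpow_pos_of_pos (by linarith [hx.2] : (0:ℝ) < t - x) _)


lemma JJ_key {t : ℝ} (ht : 1 < t) (n m : ℕ) :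
    ((n : ℝ) + (m : ℝ) + 1 / 2) * JJ t ((n : ℝ) + 1 / 2) (-((n : ℝ) + (m : ℝ) + 3 / 2)) ≤
      (2 * (n : ℝ) + 1) * JJ t ((n : ℝ) - 1 / 2) (-((n : ℝ) + (m : ℝ) + 1 / 2)) := by
  set a : ℝ := (n : ℝ) + 1 / 2 with ha
  set b : ℝ := -((n : ℝ) + (m : ℝ) + 1 / 2) with hb
  have ha0 : (0:ℝ) < a := by positivity
  have hpa : (-1:ℝ) < a := by linarith
  have hpa' : (-1:ℝ) < (n : ℝ) - 1/2 := by
    have : (0:ℝ) ≤ (n:ℝ) := Nat.cast_nonneg n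
    linarith
  -- the three integrands
  set G : ℝ → ℝ := fun s => (1 - s ^ 2) ^ ((n : ℝ) - 1 / 2) * (t - s) ^ b with hG
  set G1 : ℝ → ℝ := fun s => s * ((1 - s ^ 2) ^ ((n : ℝ) - 1 / 2) * (t - s) ^ b) with hG1
  set G2 : ℝ → ℝ := fun s => (1 - s ^ 2) ^ a * (t - s) ^ (-((n : ℝ) + (m : ℝ) + 3 / 2)) with hG2
  have hGint : IntervalIntegrable G volume (-1) 1 := JJ_integrable ht hpa' b
  have hG1int : IntervalIntegrable G1 volume (-1) 1 :=
    hGint.continuousOn_mul continuousOn_id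
  have hG2int : IntervalIntegrable G2 volume (-1) 1 := JJ_integrable ht hpa _
  set F : ℝ → ℝ := fun s => (1 - s ^ 2) ^ a * (t - s) ^ b with hF
  have hderiv : ∀ s ∈ Ioo (-1:ℝ) 1,
      HasDerivAt F (-(2 * (n:ℝ) + 1) * G1 s + ((n:ℝ) + (m:ℝ) + 1/2) * G2 s) s := by
    intro s hs
    have h1s : (0:ℝ) < 1 - s ^ 2 := by nlinarith [hs.1, hs.2]
    have hts : (0:ℝ) < t - s := by linarith [hs.2]
    have hu : HasDerivAt (fun s : ℝ => (1 - s ^ 2) ^ a)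
        ((-(2 * s)) * a * (1 - s ^ 2) ^ (a - 1)) s := by
      have hb1 : HasDerivAt (fun s : ℝ => 1 - s ^ 2) (-(2 * s)) s := by
        simpa using (hasDerivAt_pow 2 s).const_sub 1
      exact hb1.rpow_const (Or.inl h1s.ne')
    have hv : HasDerivAt (fun s : ℝ => (t - s) ^ b)
        ((-1) * b * (t - s) ^ (b - 1)) s := by
      have hb2 : HasDerivAt (fun s : ℝ => t - s) (-1) s := by
        simpa using (hasDerivAt_id s).const_sub t
      exact hb2.rpow_const (Or.inl hts.ne')
    have := hu.mul hv
    refine this.congr_deriv ?_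
    have e1 : a - 1 = (n : ℝ) - 1/2 := by rw [ha]; ring
    have e2 : b - 1 = -((n : ℝ) + (m : ℝ) + 3/2) := by rw [hb]; ring
    simp only [hG1, hG2]
    rw [e1, e2, ha, hb]
    ring
  have hcontF : ContinuousOn F (Icc (-1:ℝ) 1) := by
    apply ContinuousOn.mul
    · exact ((continuousOn_const.sub (continuousOn_pow 2))).rpow_const
        (fun x hx => Or.inr ha0.le)
    · exact (continuousOn_const.sub continuousOn_id).rpow_const
        (fun x hx => Or.inl (by simp only [mem_Icc] at hx; simp only [Pi.sub_apply, Pi.add_apply, id_eq]; nlinarith [hx.1, hx.2]))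
  have hintF' : IntervalIntegrable
      (fun s => -(2 * (n:ℝ) + 1) * G1 s + ((n:ℝ) + (m:ℝ) + 1/2) * G2 s) volume (-1) 1 :=
    (hG1int.const_mul _).add (hG2int.const_mul _)
  have hFTC := integral_eq_sub_of_hasDeriv_right_of_le (by norm_num) hcontF
      (fun x hx => (hderiv x hx).hasDerivWithinAt) hintF'
  have hF1 : F 1 = 0 := by
    have h0 : ((1:ℝ) - 1 ^ 2) = 0 := by norm_num
    rw [hF]; dsimp only
    rw [h0, Real.zero_rpow ha0.ne', zero_mul]
  have hFm1 : F (-1) = 0 := by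
    have h0 : ((1:ℝ) - (-1) ^ 2) = 0 := by norm_num
    rw [hF]; dsimp only
    rw [h0, Real.zero_rpow ha0.ne', zero_mul]
  rw [hF1, hFm1, sub_zero] at hFTC
  rw [intervalIntegral.integral_add (hG1int.const_mul _) (hG2int.const_mul _),
    intervalIntegral.integral_const_mul, intervalIntegral.integral_const_mul] at hFTC
  have hI1 : ∫ s in (-1:ℝ)..1, G1 s ≤ ∫ s in (-1:ℝ)..1, G s := by
    apply integral_mono_on (by norm_num) hG1int hGint
    intro x hx
    simp only [mem_Icc] at hx
    have hGnn : 0 ≤ (1 - x ^ 2) ^ ((n : ℝ) - 1 / 2) * (t - x) ^ b :=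
      mul_nonneg (Real.rpow_nonneg (by nlinarith [hx.1, hx.2]) _)
        (Real.rpow_nonneg (by linarith [hx.2]) _)
    calc G1 x ≤ 1 * ((1 - x ^ 2) ^ ((n : ℝ) - 1 / 2) * (t - x) ^ b) :=
          mul_le_mul_of_nonneg_right hx.2 hGnn
      _ = G x := by rw [hG]; ring
  have hJJ2 : JJ t a (-((n : ℝ) + (m : ℝ) + 3 / 2)) = ∫ s in (-1:ℝ)..1, G2 s := rfl
  have hJJ1 : JJ t ((n : ℝ) - 1 / 2) b = ∫ s in (-1:ℝ)..1, G s := rfl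
  rw [hJJ1, hJJ2]
  nlinarith [hFTC, hI1, Nat.cast_nonneg (α := ℝ) n]


noncomputable def Pq (t : ℝ) (n m : ℕ) : ℝ :=
  (Real.Gamma ((n : ℝ) + (m : ℝ) + 1 / 2) / Real.Gamma ((n : ℝ) + 1 / 2)) /
    (2 : ℝ) ^ ((n : ℝ) + 1 / 2) * JJ t ((n : ℝ) - 1 / 2) (-((n : ℝ) + (m : ℝ) + 1 / 2))

lemma Qh_eq (n m : ℕ) (t : ℝ) :
    Qh n m t = (-1 : ℝ) ^ m * ((t ^ 2 - 1) ^ ((m : ℝ) / 2) * Pq t n m) := by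
  unfold Qh Pq JJ
  ring

lemma Pq_pos {t : ℝ} (ht : 1 < t) (n m : ℕ) : 0 < Pq t n m := by
  have h1 : (0:ℝ) < Real.Gamma ((n : ℝ) + (m : ℝ) + 1 / 2) :=
    Real.Gamma_pos_of_pos (by positivity)
  have h2 : (0:ℝ) < Real.Gamma ((n : ℝ) + 1 / 2) := Real.Gamma_pos_of_pos (by positivity)
  have h3 : (0:ℝ) < (2 : ℝ) ^ ((n : ℝ) + 1 / 2) := Real.rpow_pos_of_pos two_pos _
  have h4 : (-1:ℝ) < (n : ℝ) - 1 / 2 := by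
    have : (0:ℝ) ≤ (n:ℝ) := Nat.cast_nonneg n
    linarith
  exact mul_pos (div_pos (div_pos h1 h2) h3) (JJ_pos ht h4 _)

lemma Pq_succ_le {t : ℝ} (ht : 1 < t) (n m : ℕ) : Pq t (n + 1) m ≤ Pq t n m := by
  have hA : (0:ℝ) < Real.Gamma ((n : ℝ) + (m : ℝ) + 1 / 2) :=
    Real.Gamma_pos_of_pos (by positivity)
  have hB : (0:ℝ) < Real.Gamma ((n : ℝ) + 1 / 2) := Real.Gamma_pos_of_pos (by positivity)
  have hD : (0:ℝ) < (2 : ℝ) ^ ((n : ℝ) + 1 / 2) := Real.rpow_pos_of_pos two_pos _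
  set A := Real.Gamma ((n : ℝ) + (m : ℝ) + 1 / 2) with hAdef
  set B := Real.Gamma ((n : ℝ) + 1 / 2) with hBdef
  set D := (2 : ℝ) ^ ((n : ℝ) + 1 / 2) with hDdef
  set J1 := JJ t ((n : ℝ) + 1 / 2) (-((n : ℝ) + (m : ℝ) + 3 / 2)) with hJ1def
  set J0 := JJ t ((n : ℝ) - 1 / 2) (-((n : ℝ) + (m : ℝ) + 1 / 2)) with hJ0def
  have eΓ1 : Real.Gamma ((n : ℝ) + 1 + (m : ℝ) + 1 / 2) = ((n:ℝ) + (m:ℝ) + 1/2) * A := by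
    rw [show (n:ℝ) + 1 + (m:ℝ) + 1/2 = ((n:ℝ) + (m:ℝ) + 1/2) + 1 by ring,
      Real.Gamma_add_one (by positivity)]
  have eΓ2 : Real.Gamma ((n : ℝ) + 1 + 1 / 2) = ((n:ℝ) + 1/2) * B := by
    rw [show (n:ℝ) + 1 + 1/2 = ((n:ℝ) + 1/2) + 1 by ring,
      Real.Gamma_add_one (by positivity)]
  have eD : (2 : ℝ) ^ ((n : ℝ) + 1 + 1 / 2) = D * 2 := by
    rw [show (n:ℝ) + 1 + 1/2 = ((n:ℝ) + 1/2) + 1 by ring, Real.rpow_add two_pos,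
      Real.rpow_one]
  have eJ : JJ t ((n : ℝ) + 1 - 1 / 2) (-((n : ℝ) + 1 + (m : ℝ) + 1 / 2)) = J1 := by
    rw [show (n:ℝ) + 1 - 1/2 = (n:ℝ) + 1/2 by ring,
      show -((n:ℝ) + 1 + (m:ℝ) + 1/2) = -((n:ℝ) + (m:ℝ) + 3/2) by ring]
  have e1 : Pq t (n + 1) m =
      (A / (B * D)) / (2 * (n:ℝ) + 1) * (((n:ℝ) + (m:ℝ) + 1/2) * J1) := by
    unfold Pq
    push_cast
    rw [eΓ1, eΓ2, eD, eJ]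
    field_simp
  have e0 : Pq t n m = (A / (B * D)) / (2 * (n:ℝ) + 1) * ((2 * (n:ℝ) + 1) * J0) := by
    unfold Pq
    rw [← hAdef, ← hBdef, ← hDdef, ← hJ0def]
    field_simp
  rw [e1, e0]
  have hc : (0:ℝ) < (A / (B * D)) / (2 * (n:ℝ) + 1) := by
    apply div_pos (div_pos hA (mul_pos hB hD))
    positivity
  exact mul_le_mul_of_nonneg_left (JJ_key ht n m) hc.le

lemma Qh_abs {t : ℝ} (ht : 1 < t) (n m : ℕ) :
    |Qh n m t| = (t ^ 2 - 1) ^ ((m : ℝ) / 2) * Pq t n m := by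
  have hW : (0:ℝ) < (t ^ 2 - 1) ^ ((m : ℝ) / 2) :=
    Real.rpow_pos_of_pos (by nlinarith) _
  rw [Qh_eq, abs_mul, abs_pow, abs_neg, abs_one, one_pow, one_mul,
    abs_of_pos (mul_pos hW (Pq_pos ht n m))]

lemma Qh_ne {t : ℝ} (ht : 1 < t) (n m : ℕ) : Qh n m t ≠ 0 := by
  intro h
  have := Qh_abs ht n m
  rw [h, abs_zero] at this
  have hW : (0:ℝ) < (t ^ 2 - 1) ^ ((m : ℝ) / 2) :=
    Real.rpow_pos_of_pos (by nlinarith) _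
  nlinarith [Pq_pos ht n m]

lemma Qh_ratio {t : ℝ} (ht : 1 < t) (n m : ℕ) :
    |Qh (n + 1) m t / Qh n m t| ≤ 1 := by
  rw [abs_div, div_le_one (abs_pos.mpr (Qh_ne ht n m))]
  rw [Qh_abs ht, Qh_abs ht]
  have hW : (0:ℝ) < (t ^ 2 - 1) ^ ((m : ℝ) / 2) :=
    Real.rpow_pos_of_pos (by nlinarith) _
  exact mul_le_mul_of_nonneg_left (Pq_succ_le ht n m) hW.le


lemma qh_ratio {η₀ : ℝ} (hη₀ : 0 < η₀) (n m : ℕ) :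
    |qh η₀ (n + 1) m / qh η₀ n m| ≤ 1 :=
  Qh_ratio (Real.one_lt_cosh.mpr hη₀.ne') n m

lemma abs_mul_ratio {q1 q0 : ℝ} (x : ℝ) (h : |q1 / q0| ≤ 1) : |x * q1 / q0| ≤ |x| := by
  rw [mul_div_assoc, abs_mul]
  exact mul_le_of_le_one_right (abs_nonneg x) h

noncomputable def KT (η₀ : ℝ) : ℝ :=
  (3 * Real.cosh η₀ ^ 2 + 3 * Real.cosh η₀ + 3) / Real.sinh η₀

lemma KT_pos {η₀ : ℝ} (hη₀ : 0 < η₀) : 0 < KT η₀ := by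
  have hS : 0 < Real.sinh η₀ := by positivity
  have hT : 1 ≤ Real.cosh η₀ := Real.one_le_cosh η₀
  unfold KT
  apply div_pos _ hS
  nlinarith

lemma sigma_bound {η₀ : ℝ} (hη₀ : 0 < η₀) (n m : ℕ) :
    |sigmaT η₀ n m| ≤ KT η₀ * ((n : ℝ) + (m : ℝ) + 1) := by
  have hS : 0 < Real.sinh η₀ := by positivity
  have hT : 1 ≤ Real.cosh η₀ := Real.one_le_cosh η₀
  have hn : (0:ℝ) ≤ (n:ℝ) := Nat.cast_nonneg n
  have hm : (0:ℝ) ≤ (m:ℝ) := Nat.cast_nonneg m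
  set T := Real.cosh η₀
  set S := Real.sinh η₀
  have hY : |(2 * ((m : ℝ) - (n : ℝ)) - 1) * T * qh η₀ (n + 1) m / qh η₀ n m| ≤
      (2 * ((n:ℝ) + (m:ℝ)) + 1) * T := by
    refine le_trans (abs_mul_ratio _ (qh_ratio hη₀ n m)) ?_
    rw [abs_mul, abs_of_pos (by linarith : (0:ℝ) < T)]
    apply mul_le_mul_of_nonneg_right _ (by linarith)
    rw [abs_le]
    constructor <;> nlinarith
  have hX : |2 * (n : ℝ) * T ^ 2 + 1| = 2 * (n : ℝ) * T ^ 2 + 1 :=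
    abs_of_pos (by nlinarith)
  calc |sigmaT η₀ n m| ≤ |(-1) / (2 * S)| *
        (|2 * (n : ℝ) * T ^ 2 + 1| +
          |(2 * ((m : ℝ) - (n : ℝ)) - 1) * T * qh η₀ (n + 1) m / qh η₀ n m|) := by
        rw [sigmaT, abs_mul]
        exact mul_le_mul_of_nonneg_left (abs_add_le _ _) (abs_nonneg _)
    _ ≤ (1 / (2 * S)) * ((2 * (n : ℝ) * T ^ 2 + 1) + (2 * ((n:ℝ) + (m:ℝ)) + 1) * T) := by
        rw [hX, abs_div, abs_neg, abs_one, abs_of_pos (by linarith : (0:ℝ) < 2 * S)]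
        apply mul_le_mul_of_nonneg_left _ (by positivity)
        linarith
    _ ≤ KT η₀ * ((n : ℝ) + (m : ℝ) + 1) := by
        have hKT : KT η₀ = (3 * T ^ 2 + 3 * T + 3) / S := rfl
        have hT0 : (0:ℝ) ≤ T := by linarith
        have hcore : 2 * (n:ℝ) * T ^ 2 + 1 + (2 * ((n:ℝ) + (m:ℝ)) + 1) * T ≤
            (3 * T ^ 2 + 3 * T + 3) * ((n:ℝ) + (m:ℝ) + 1) * 2 := by
          nlinarith [mul_nonneg hn (mul_nonneg hT0 hT0), mul_nonneg hm (mul_nonneg hT0 hT0),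
            mul_nonneg hn hT0, mul_nonneg hm hT0, sq_nonneg T]
        rw [hKT, div_mul_eq_mul_div, div_mul_eq_mul_div, div_le_div_iff₀ (by linarith) hS]
        nlinarith [mul_le_mul_of_nonneg_right hcore hS.le]

lemma tau_bound {η₀ : ℝ} (hη₀ : 0 < η₀) (n m : ℕ) :
    |tauT η₀ n m| ≤ KT η₀ * ((n : ℝ) + (m : ℝ) + 1) := by
  have hS : 0 < Real.sinh η₀ := by positivity
  have hT : 1 ≤ Real.cosh η₀ := Real.one_le_cosh η₀
  have hn : (0:ℝ) ≤ (n:ℝ) := Nat.cast_nonneg n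
  have hm : (0:ℝ) ≤ (m:ℝ) := Nat.cast_nonneg m
  set T := Real.cosh η₀
  set S := Real.sinh η₀
  have hrat : |qh η₀ (n + 2) m / qh η₀ (n + 1) m| ≤ 1 := qh_ratio hη₀ (n + 1) m
  have hY : |(2 * ((m : ℝ) - (n : ℝ)) - 3) * qh η₀ (n + 2) m / qh η₀ (n + 1) m| ≤
      2 * ((n:ℝ) + (m:ℝ)) + 3 := by
    refine le_trans (abs_mul_ratio _ hrat) ?_
    rw [abs_le]
    constructor <;> nlinarith
  have hX : |(2 * (n : ℝ) + 3) * T| = (2 * (n : ℝ) + 3) * T :=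
    abs_of_pos (by nlinarith)
  calc |tauT η₀ n m| ≤ |1 / (4 * S)| *
        (|(2 * (n : ℝ) + 3) * T| +
          |(2 * ((m : ℝ) - (n : ℝ)) - 3) * qh η₀ (n + 2) m / qh η₀ (n + 1) m|) := by
        rw [tauT, abs_mul]
        exact mul_le_mul_of_nonneg_left (abs_add_le _ _) (abs_nonneg _)
    _ ≤ (1 / (4 * S)) * ((2 * (n : ℝ) + 3) * T + (2 * ((n:ℝ) + (m:ℝ)) + 3)) := by
        rw [hX, abs_div, abs_one, abs_of_pos (by linarith : (0:ℝ) < 4 * S)]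
        apply mul_le_mul_of_nonneg_left _ (by positivity)
        linarith
    _ ≤ KT η₀ * ((n : ℝ) + (m : ℝ) + 1) := by
        have hKT : KT η₀ = (3 * T ^ 2 + 3 * T + 3) / S := rfl
        have hT0 : (0:ℝ) ≤ T := by linarith
        have hcore : (2 * (n:ℝ) + 3) * T + (2 * ((n:ℝ) + (m:ℝ)) + 3) ≤
            (3 * T ^ 2 + 3 * T + 3) * ((n:ℝ) + (m:ℝ) + 1) * 4 := by
          nlinarith [mul_nonneg hn (mul_nonneg hT0 hT0), mul_nonneg hm (mul_nonneg hT0 hT0),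
            mul_nonneg hn hT0, mul_nonneg hm hT0, sq_nonneg T]
        rw [hKT, div_mul_eq_mul_div, div_mul_eq_mul_div, div_le_div_iff₀ (by linarith) hS]
        nlinarith [mul_le_mul_of_nonneg_right hcore hS.le]

lemma rho_bound {η₀ : ℝ} (hη₀ : 0 < η₀) (n m : ℕ) (hn1 : 1 ≤ n) :
    |rhoT η₀ n m| ≤ KT η₀ * ((n : ℝ) + (m : ℝ) + 1) := by
  have hS : 0 < Real.sinh η₀ := by positivity
  have hT : 1 ≤ Real.cosh η₀ := Real.one_le_cosh η₀
  have hm : (0:ℝ) ≤ (m:ℝ) := Nat.cast_nonneg m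
  set T := Real.cosh η₀
  set S := Real.sinh η₀
  by_cases h1 : n = 1
  · subst h1
    have hrat : |qh η₀ 1 m / qh η₀ 0 m| ≤ 1 := qh_ratio hη₀ 0 m
    have hT0 : (0:ℝ) ≤ T := by linarith
    have hY : |(2 * (m : ℝ) - 1) * qh η₀ 1 m / qh η₀ 0 m| ≤ 2 * (m:ℝ) + 1 := by
      refine le_trans (abs_mul_ratio _ hrat) ?_
      rw [abs_le]
      constructor <;> nlinarith
    have hX : |T| = T := abs_of_pos (by linarith)
    calc |rhoT η₀ 1 m| ≤ |1 / (2 * S)| *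
          (|T| + |(2 * (m : ℝ) - 1) * qh η₀ 1 m / qh η₀ 0 m|) := by
          rw [rhoT, if_pos rfl, abs_mul]
          exact mul_le_mul_of_nonneg_left (abs_add_le _ _) (abs_nonneg _)
      _ ≤ (1 / (2 * S)) * (T + (2 * (m:ℝ) + 1)) := by
          rw [hX, abs_div, abs_one, abs_of_pos (by linarith : (0:ℝ) < 2 * S)]
          apply mul_le_mul_of_nonneg_left _ (by positivity)
          linarith
      _ ≤ KT η₀ * (((1:ℕ) : ℝ) + (m : ℝ) + 1) := by
          have hKT : KT η₀ = (3 * T ^ 2 + 3 * T + 3) / S := rfl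
          have hcore : T + (2 * (m:ℝ) + 1) ≤
              (3 * T ^ 2 + 3 * T + 3) * (((1:ℕ):ℝ) + (m:ℝ) + 1) * 2 := by
            push_cast
            nlinarith [mul_nonneg hm hT0, sq_nonneg T, mul_nonneg hm (mul_nonneg hT0 hT0)]
          rw [hKT, div_mul_eq_mul_div, div_mul_eq_mul_div, div_le_div_iff₀ (by linarith) hS]
          nlinarith [mul_le_mul_of_nonneg_right hcore hS.le]
  · obtain ⟨k, rfl⟩ : ∃ k, n = k + 1 := ⟨n - 1, (Nat.succ_pred_eq_of_pos hn1).symm⟩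
    have hrat : |qh η₀ (k + 1) m / qh η₀ k m| ≤ 1 := qh_ratio hη₀ k m
    have hk : (0:ℝ) ≤ (k:ℝ) := Nat.cast_nonneg k
    have hT0 : (0:ℝ) ≤ T := by linarith
    have hcast : ((k + 1 : ℕ) : ℝ) = (k : ℝ) + 1 := by push_cast; ring
    have hsub : (k + 1) - 1 = k := rfl
    have hY : |(2 * ((m : ℝ) - ((k+1:ℕ) : ℝ)) + 1) * qh η₀ (k+1) m / qh η₀ k m| ≤
        2 * ((k:ℝ) + (m:ℝ)) + 3 := by
      refine le_trans (abs_mul_ratio _ hrat) ?_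
      rw [hcast, abs_le]
      constructor <;> nlinarith
    have hX : |(2 * ((k+1:ℕ) : ℝ) - 1) * T| = (2 * ((k:ℝ)+1) - 1) * T := by
      rw [hcast]
      exact abs_of_pos (by nlinarith)
    calc |rhoT η₀ (k+1) m| ≤ |1 / (4 * S)| *
          (|(2 * ((k+1:ℕ) : ℝ) - 1) * T| +
            |(2 * ((m : ℝ) - ((k+1:ℕ) : ℝ)) + 1) * qh η₀ (k+1) m / qh η₀ k m|) := by
          rw [rhoT, if_neg h1, hsub, abs_mul]
          exact mul_le_mul_of_nonneg_left (abs_add_le _ _) (abs_nonneg _)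
      _ ≤ (1 / (4 * S)) * ((2 * ((k:ℝ)+1) - 1) * T + (2 * ((k:ℝ) + (m:ℝ)) + 3)) := by
          rw [hX, abs_div, abs_one, abs_of_pos (by linarith : (0:ℝ) < 4 * S)]
          apply mul_le_mul_of_nonneg_left _ (by positivity)
          linarith [hY]
      _ ≤ KT η₀ * (((k+1:ℕ) : ℝ) + (m : ℝ) + 1) := by
          have hKT : KT η₀ = (3 * T ^ 2 + 3 * T + 3) / S := rfl
          have hcore : (2 * ((k:ℝ)+1) - 1) * T + (2 * ((k:ℝ) + (m:ℝ)) + 3) ≤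
              (3 * T ^ 2 + 3 * T + 3) * (((k+1:ℕ):ℝ) + (m:ℝ) + 1) * 4 := by
            rw [hcast]
            nlinarith [mul_nonneg hk hT0, mul_nonneg hm hT0,
              mul_nonneg hk (mul_nonneg hT0 hT0), mul_nonneg hm (mul_nonneg hT0 hT0), sq_nonneg T]
          rw [hKT, div_mul_eq_mul_div, div_mul_eq_mul_div, div_le_div_iff₀ (by linarith) hS]
          nlinarith [mul_le_mul_of_nonneg_right hcore hS.le]

/-- decay of the Neumann coefficients `b` given decay of the Dirichlet
coefficients `a`; the constant depends only on `C` and `η₀`. -/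
theorem neumann_coefficient_bound (η₀ : ℝ) (hη₀ : 0 < η₀)
    (r : ℕ) (hr : 4 ≤ r) (C : ℝ) (hC : 0 < C) :
    ∃ C' > (0 : ℝ), ∀ (a b : ℕ → ℕ → ℤ → ℤ → ℝ),
      (∀ n m ν μ, Admissible n m ν μ →
        |a n m ν μ| ≤ C / ((n : ℝ) + (m : ℝ) + 1) ^ r) →
      (∀ n m ν μ, Admissible n m ν μ →
        b n m ν μ =
          (if n = 0 ∨ (ν = -1 ∧ n = 1) then 0 else rhoT η₀ n m) * a (n - 1) m ν μ +
            sigmaT η₀ n m * a n m ν μ + tauT η₀ n m * a (n + 1) m ν μ) →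
      ∀ n m ν μ, Admissible n m ν μ →
        |b n m ν μ| ≤ C' / ((n : ℝ) + (m : ℝ) + 1) ^ (r - 1) := by
  set K := KT η₀ with hK
  have hKpos : 0 < K := KT_pos hη₀
  refine ⟨K * C * (2 ^ r + 2), by positivity, ?_⟩
  intro a b ha hb n m ν μ hadm
  rw [hb n m ν μ hadm]
  set N : ℝ := (n : ℝ) + (m : ℝ) + 1 with hN
  have hN1 : (1:ℝ) ≤ N := by
    have : (0:ℝ) ≤ (n:ℝ) := Nat.cast_nonneg n
    have : (0:ℝ) ≤ (m:ℝ) := Nat.cast_nonneg m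
    simp only [hN]; linarith
  have hNpos : (0:ℝ) < N := by linarith
  have hrr : r - 1 + 1 = r := by omega
  have epow : N ^ r = N ^ (r - 1) * N := by rw [← pow_succ, hrr]
  have hNr1 : (0:ℝ) < N ^ (r - 1) := by positivity
  -- sigma term
  have hsig : |sigmaT η₀ n m * a n m ν μ| ≤ K * C / N ^ (r - 1) := by
    rw [abs_mul]
    calc |sigmaT η₀ n m| * |a n m ν μ| ≤ (K * N) * (C / N ^ r) := by
          apply mul_le_mul (sigma_bound hη₀ n m) (ha n m ν μ hadm) (abs_nonneg _)
          positivity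
      _ = K * C / N ^ (r - 1) := by
          rw [epow]; field_simp
  -- tau term
  have hadm' : Admissible (n + 1) m ν μ :=
    ⟨hadm.1, hadm.2.1, by simp, hadm.2.2.2⟩
  have htau : |tauT η₀ n m * a (n + 1) m ν μ| ≤ K * C / N ^ (r - 1) := by
    rw [abs_mul]
    have hca : ((n + 1 : ℕ) : ℝ) + (m : ℝ) + 1 = N + 1 := by
      simp only [hN]; push_cast; ring
    have h1 : |a (n + 1) m ν μ| ≤ C / (N + 1) ^ r := by
      have := ha (n + 1) m ν μ hadm'
      rwa [hca] at this
    calc |tauT η₀ n m| * |a (n + 1) m ν μ| ≤ (K * N) * (C / (N + 1) ^ r) := by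
          apply mul_le_mul (tau_bound hη₀ n m) h1 (abs_nonneg _)
          positivity
      _ ≤ (K * N) * (C / N ^ r) := by gcongr <;> linarith
      _ = K * C / N ^ (r - 1) := by rw [epow]; field_simp
  -- rho term
  have hrho : |(if n = 0 ∨ (ν = -1 ∧ n = 1) then 0 else rhoT η₀ n m) * a (n - 1) m ν μ| ≤
      K * C * 2 ^ r / N ^ (r - 1) := by
    by_cases hc : n = 0 ∨ (ν = -1 ∧ n = 1)
    · rw [if_pos hc, zero_mul, abs_zero]
      positivity
    · rw [if_neg hc]
      push_neg at hc
      have hn1 : 1 ≤ n := Nat.one_le_iff_ne_zero.mpr hc.1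
      have hadm'' : Admissible (n - 1) m ν μ := by
        refine ⟨hadm.1, hadm.2.1, ?_, hadm.2.2.2⟩
        rintro ⟨h0, hv⟩
        have : n = 1 := by omega
        exact (hc.2 hv) this
      set M : ℝ := (n : ℝ) + (m : ℝ) with hM
      have hM1 : (1:ℝ) ≤ M := by
        have h1 : (1:ℝ) ≤ (n:ℝ) := by exact_mod_cast hn1
        have : (0:ℝ) ≤ (m:ℝ) := Nat.cast_nonneg m
        simp only [hM]; linarith
      have hMpos : (0:ℝ) < M := by linarith
      have hca : ((n - 1 : ℕ) : ℝ) + (m : ℝ) + 1 = M := by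
        simp only [hM]
        rw [Nat.cast_sub hn1]
        push_cast; ring
      have h1 : |a (n - 1) m ν μ| ≤ C / M ^ r := by
        have := ha (n - 1) m ν μ hadm''
        rwa [hca] at this
      have hNM : N ≤ 2 * M := by simp only [hN, hM]; linarith
      have hpow2 : N ^ r ≤ 2 ^ r * M ^ r := by
        calc N ^ r ≤ (2 * M) ^ r := pow_le_pow_left₀ (by linarith) hNM r
          _ = 2 ^ r * M ^ r := mul_pow 2 M r
      have h2 : C / M ^ r ≤ C * 2 ^ r / N ^ r := by
        rw [div_le_div_iff₀ (by positivity) (by positivity)]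
        calc C * N ^ r ≤ C * (2 ^ r * M ^ r) :=
              mul_le_mul_of_nonneg_left hpow2 hC.le
          _ = C * 2 ^ r * M ^ r := by ring
      rw [abs_mul]
      calc |rhoT η₀ n m| * |a (n - 1) m ν μ| ≤ (K * N) * (C * 2 ^ r / N ^ r) := by
            apply mul_le_mul (rho_bound hη₀ n m hn1) (h1.trans h2) (abs_nonneg _)
            positivity
        _ = K * C * 2 ^ r / N ^ (r - 1) := by rw [epow]; field_simp
  calc |(if n = 0 ∨ (ν = -1 ∧ n = 1) then 0 else rhoT η₀ n m) * a (n - 1) m ν μ +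
        sigmaT η₀ n m * a n m ν μ + tauT η₀ n m * a (n + 1) m ν μ| ≤
        |(if n = 0 ∨ (ν = -1 ∧ n = 1) then 0 else rhoT η₀ n m) * a (n - 1) m ν μ| +
          |sigmaT η₀ n m * a n m ν μ| + |tauT η₀ n m * a (n + 1) m ν μ| :=
        (abs_add_le _ _).trans (by gcongr; exact abs_add_le _ _)
    _ ≤ K * C * 2 ^ r / N ^ (r - 1) + K * C / N ^ (r - 1) + K * C / N ^ (r - 1) := by
        gcongr
    _ = K * C * (2 ^ r + 2) / N ^ (r - 1) := by field_simp; ring
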